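/- arXiv:1503.01041 — 2 statements merged into one kernel-verified Lean document; each statement's English description precedes it below -/
import Mathlib

section
/- Let f be holomorphic in a neighborhood of z0 = 1 with f'(1) ≠ 0, and suppose there exist c ∈ ℂ and ρ > 0 such that (f(x) - c)·conj(f(1/x) - c) = ρ² for all real x in an interval (1-ε, 1+ε). Then 1/ρ = ±(1/|f'(1)|)·Re(1 + f''(1)/f'(1)), i.e. |Re(1 + f''(1)/f'(1))| / |f'(1)| = 1/|f(1) - c|. -/
open Complex ComplexConjugate


private lemma stmt5_alg (A B C : ℂ) (ρ : ℝ) (hρ : 0 < ρ) (hB : B ≠ 0)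
    (h1 : A * conj A = (ρ : ℂ) ^ 2)
    (h2 : B * conj A - A * conj B = 0)
    (h3 : C * conj A + A * conj C + 2 * (A * conj B) - 2 * (B * conj B) = 0) :
    |(1 + C / B).re| / ‖B‖ = 1 / ‖A‖ := by
  have habsA : ‖A‖ = ρ := by
    have hmc : A * conj A = (Complex.normSq A : ℂ) := Complex.mul_conj A
    have hn : Complex.normSq A = ρ ^ 2 := by
      have : (Complex.normSq A : ℂ) = ((ρ ^ 2 : ℝ) : ℂ) := by rw [← hmc, h1]; push_cast; ring
      exact_mod_cast this
    have hsq := Complex.sq_norm A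
    nlinarith [norm_nonneg A]
  have hAne : A ≠ 0 := by
    intro h
    rw [h] at habsA; simp at habsA
    exact hρ.ne' habsA.symm
  set τ : ℝ := (B * conj A).re with hτdef
  have hτ : B * conj A = (τ : ℂ) := by
    have hc : conj (B * conj A) = B * conj A := by
      rw [map_mul, Complex.conj_conj]
      have h2' := sub_eq_zero.mp h2
      linear_combination -h2'
    exact (Complex.conj_eq_iff_re.mp hc).symm
  have hτabs : |τ| = ‖B‖ * ρ := by
    have : ‖(τ : ℂ)‖ = ‖B * conj A‖ := by rw [hτ]
    rw [norm_mul, Complex.norm_conj, habsA, Complex.norm_real, Real.norm_eq_abs] at this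
    exact this
  have hBpos : 0 < ‖B‖ := norm_pos_iff.mpr hB
  have hτne : τ ≠ 0 := by
    intro h
    rw [h] at hτabs; simp at hτabs
    rcases hτabs with h | h
    · exact hB h
    · exact hρ.ne' h
  have hconjA : conj A = (τ : ℂ) / B := by
    rw [eq_div_iff hB, mul_comm]; exact hτ
  have hAeq : A = (τ : ℂ) / conj B := by
    have := congrArg (fun z => conj z) hconjA
    simpa [map_div₀, Complex.conj_conj, Complex.conj_ofReal] using this
  -- real parts
  have hACre : (A * conj C).re = (C * conj A).re := by
    have h : A * conj C = conj (C * conj A) := by rw [map_mul, Complex.conj_conj]; ring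
    rw [h, Complex.conj_re]
  have hABre : (A * conj B).re = τ := by
    have h : A * conj B = conj (B * conj A) := by rw [map_mul, Complex.conj_conj]; ring
    rw [h, Complex.conj_re]
  have hBBre : (B * conj B).re = Complex.normSq B := by
    rw [Complex.mul_conj]; simp
  have h3' : C * conj A + A * conj C + (A * conj B + A * conj B)
      - (B * conj B + B * conj B) = 0 := by linear_combination h3
  have h3re : (C * conj A).re = Complex.normSq B - τ := by
    have := congrArg Complex.re h3'
    simp only [Complex.add_re, Complex.sub_re, Complex.zero_re] at this
    linarith [hACre, hABre, hBBre, this]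
  have hCB : C * conj A = (τ : ℂ) * (C / B) := by
    rw [hconjA]; ring
  have hCBre : τ * (C / B).re = Complex.normSq B - τ := by
    have := congrArg Complex.re hCB
    rw [h3re] at this
    simp only [Complex.mul_re, Complex.ofReal_re, Complex.ofReal_im, zero_mul, sub_zero] at this
    linarith
  have hre : (1 + C / B).re = Complex.normSq B / τ := by
    rw [Complex.add_re, Complex.one_re]
    field_simp
    linarith [hCBre]
  rw [hre, habsA, abs_div, _root_.abs_of_nonneg (Complex.normSq_nonneg B), hτabs,
    ← Complex.sq_norm B]
  field_simp

private lemma stmt5_comp_inv {F : ℂ → ℂ} {x : ℝ} (hx : x ≠ 0)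
    (hF : DifferentiableAt ℂ F ((x : ℂ)⁻¹)) :
    HasDerivAt (fun y : ℝ => F ((y : ℂ)⁻¹))
      ((-(x ^ 2)⁻¹ : ℝ) • deriv F ((x : ℂ)⁻¹)) x := by
  have h0 : HasDerivAt F (deriv F ((x : ℂ)⁻¹)) (((x⁻¹ : ℝ) : ℂ)) := by
    rw [Complex.ofReal_inv]; exact hF.hasDerivAt
  have h1 : HasDerivAt (fun y : ℝ => F (y : ℂ)) (deriv F ((x : ℂ)⁻¹)) x⁻¹ :=
    h0.comp_ofReal
  have h2 : HasDerivAt (fun y : ℝ => y⁻¹) (-(x ^ 2)⁻¹) x := hasDerivAt_inv hx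
  have h3 := h1.scomp x h2
  have hcomp : ((fun y : ℝ => F (y : ℂ)) ∘ fun y : ℝ => y⁻¹)
      = fun y : ℝ => F ((y : ℂ)⁻¹) := by
    funext y; simp [Function.comp, Complex.ofReal_inv]
  rwa [hcomp] at h3

theorem stmt5 (f : ℂ → ℂ) (c : ℂ) (ρ ε : ℝ) (hρ : 0 < ρ) (hε : 0 < ε)
    (hf : AnalyticAt ℂ f 1) (hf' : deriv f 1 ≠ 0)
    (hrefl : ∀ x : ℝ, |x - 1| < ε →
      (f (x : ℂ) - c) * conj (f (1 / (x : ℂ)) - c) = (ρ : ℂ) ^ 2) :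
    |(1 + deriv (deriv f) 1 / deriv f 1).re| / ‖deriv f 1‖
      = 1 / ‖f 1 - c‖ := by
  obtain ⟨s, hs, hfs⟩ := hf.exists_mem_nhds_analyticOnNhd
  have hds : AnalyticOnNhd ℂ (deriv f) s := hfs.deriv
  have h1s : (1 : ℂ) ∈ s := mem_of_mem_nhds hs
  have hcoe : Filter.Tendsto (fun x : ℝ => (x : ℂ)) (nhds 1) (nhds 1) := by
    have h := Complex.continuous_ofReal.continuousAt (x := (1 : ℝ))
    simpa [ContinuousAt] using h
  have hinv : Filter.Tendsto (fun x : ℝ => (x : ℂ)⁻¹) (nhds 1) (nhds 1) := by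
    simpa using hcoe.inv₀ (by norm_num)
  have hmem1 : ∀ᶠ x : ℝ in nhds 1, (x : ℂ) ∈ s :=
    hcoe.eventually (by exact hs : ∀ᶠ z : ℂ in nhds 1, z ∈ s)
  have hmem2 : ∀ᶠ x : ℝ in nhds 1, (x : ℂ)⁻¹ ∈ s :=
    hinv.eventually (by exact hs : ∀ᶠ z : ℂ in nhds 1, z ∈ s)
  have hne : ∀ᶠ x : ℝ in nhds 1, x ≠ 0 := eventually_ne_nhds one_ne_zero
  have hlt : ∀ᶠ x : ℝ in nhds 1, |x - 1| < ε := by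
    filter_upwards [Metric.ball_mem_nhds (1 : ℝ) hε] with x hx
    simpa [Real.dist_eq] using hx
  have hgconst : (fun x : ℝ => (f x - c) * star (f ((x : ℂ)⁻¹) - c))
      =ᶠ[nhds 1] fun _ => (ρ : ℂ) ^ 2 := by
    filter_upwards [hlt] with x hx
    simpa only [one_div, starRingEnd_apply] using hrefl x hx
  have hg0 : ∀ᶠ x : ℝ in nhds 1,
      HasDerivAt (fun x : ℝ => (f x - c) * star (f ((x : ℂ)⁻¹) - c)) 0 x := by
    filter_upwards [hgconst.eventually_nhds] with x hx
    exact (hasDerivAt_const x ((ρ : ℂ) ^ 2)).congr_of_eventuallyEq hx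
  have hgφ : ∀ᶠ x : ℝ in nhds 1,
      HasDerivAt (fun x : ℝ => (f x - c) * star (f ((x : ℂ)⁻¹) - c))
        (deriv f (x : ℂ) * star (f ((x : ℂ)⁻¹) - c)
          + (f (x : ℂ) - c) * star ((-(x ^ 2)⁻¹ : ℝ) • deriv f ((x : ℂ)⁻¹))) x := by
    filter_upwards [hmem1, hmem2, hne] with x hx1 hx2 hx0
    have hu : HasDerivAt (fun y : ℝ => f (y : ℂ)) (deriv f (x : ℂ)) x :=
      ((hfs _ hx1).differentiableAt.hasDerivAt).comp_ofReal
    have hv : HasDerivAt (fun y : ℝ => f ((y : ℂ)⁻¹))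
        ((-(x ^ 2)⁻¹ : ℝ) • deriv f ((x : ℂ)⁻¹)) x :=
      stmt5_comp_inv hx0 (hfs _ hx2).differentiableAt
    exact (hu.sub_const c).mul ((hv.sub_const c).star)
  have hφ0 : (fun x : ℝ =>
      deriv f (x : ℂ) * star (f ((x : ℂ)⁻¹) - c)
        + (f (x : ℂ) - c) * star ((-(x ^ 2)⁻¹ : ℝ) • deriv f ((x : ℂ)⁻¹)))
      =ᶠ[nhds 1] fun _ => (0 : ℂ) := by
    filter_upwards [hg0, hgφ] with x h0 hx
    exact hx.unique h0
  have hrel1' := hφ0.self_of_nhds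
  -- second derivative
  have hC1 : HasDerivAt (fun x : ℝ => deriv f (x : ℂ)) (deriv (deriv f) 1) 1 := by
    have h : HasDerivAt (deriv f) (deriv (deriv f) 1) (((1 : ℝ) : ℂ)) := by
      simpa using (hds _ h1s).differentiableAt.hasDerivAt
    exact h.comp_ofReal
  have hv1 : HasDerivAt (fun x : ℝ => f ((x : ℂ)⁻¹))
      ((-((1 : ℝ) ^ 2)⁻¹ : ℝ) • deriv f (((1 : ℝ) : ℂ))⁻¹) 1 :=
    stmt5_comp_inv one_ne_zero (by simpa using (hfs _ h1s).differentiableAt)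
  have hw1 : HasDerivAt (fun x : ℝ => deriv f ((x : ℂ)⁻¹))
      ((-((1 : ℝ) ^ 2)⁻¹ : ℝ) • deriv (deriv f) (((1 : ℝ) : ℂ))⁻¹) 1 :=
    stmt5_comp_inv one_ne_zero (by simpa using (hds _ h1s).differentiableAt)
  have hr1 : HasDerivAt (fun x : ℝ => -(x ^ 2)⁻¹) (2 : ℝ) 1 := by
    have h := ((hasDerivAt_pow 2 (1 : ℝ)).inv (by norm_num)).neg
    exact (show HasDerivAt (fun x : ℝ => -(x ^ 2)⁻¹) _ 1 from h).congr_deriv (by norm_num)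
  have hu1 : HasDerivAt (fun x : ℝ => f (x : ℂ)) (deriv f 1) 1 := by
    have h : HasDerivAt f (deriv f 1) (((1 : ℝ) : ℂ)) := by
      simpa using (hfs _ h1s).differentiableAt.hasDerivAt
    exact h.comp_ofReal
  have hsm := hr1.smul hw1
  have htot := (hC1.mul ((hv1.sub_const c).star)).add
    ((hu1.sub_const c).mul hsm.star)
  have h00 : HasDerivAt (fun x : ℝ =>
      deriv f (x : ℂ) * star (f ((x : ℂ)⁻¹) - c)
        + (f (x : ℂ) - c) * star ((-(x ^ 2)⁻¹ : ℝ) • deriv f ((x : ℂ)⁻¹))) 0 1 :=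
    (hasDerivAt_const 1 (0 : ℂ)).congr_of_eventuallyEq hφ0
  have hE := htot.unique h00
  push_cast at hE hrel1'
  norm_num [real_smul] at hE hrel1'
  have h1 : (f 1 - c) * conj (f 1 - c) = (ρ : ℂ) ^ 2 := by
    have := hrefl 1 (by simpa using hε)
    simpa only [Complex.ofReal_one, one_div, inv_one] using this
  have h2 : deriv f 1 * conj (f 1 - c) - (f 1 - c) * conj (deriv f 1) = 0 := by
    simp only [map_sub]
    linear_combination hrel1'
  have h3 : deriv (deriv f) 1 * conj (f 1 - c) + (f 1 - c) * conj (deriv (deriv f) 1)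
      + 2 * ((f 1 - c) * conj (deriv f 1)) - 2 * (deriv f 1 * conj (deriv f 1)) = 0 := by
    simp only [map_sub]
    linear_combination hE
  exact stmt5_alg (f 1 - c) (deriv f 1) (deriv (deriv f) 1) ρ hρ hf' h1 h2 h3
end

section
/- Let n ≥ 2 and P_n(z) = z^n. Suppose f is holomorphic with nonvanishing derivative near z0^n ≠ 0 and f_n is holomorphic with nonvanishing derivative near z0 ≠ 0, f_n nonvanishing, and f_n(z)^n = f(z^n) near z0. Then ((1 - n²)/2)·(f_n'(z)/f_n(z))² + S_{f_n}(z) = S_f(z^n)·n²·z^{2(n-1)} + ((1 - n²)/2)·z^{-2}. -/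
open Filter

/-- The Schwarzian derivative `S_f = (f''/f')' - (1/2)(f''/f')²`. -/
noncomputable def schwarzian (f : ℂ → ℂ) (z : ℂ) : ℂ :=
  deriv (fun w => deriv (deriv f) w / deriv f w) z
    - (1 / 2) * (deriv (deriv f) z / deriv f z) ^ 2

lemma analyticAt_deriv {f : ℂ → ℂ} {x : ℂ} (h : AnalyticAt ℂ f x) : AnalyticAt ℂ (deriv f) x := by
  have h2 : AnalyticAt ℂ (fderiv ℂ f) x := h.fderiv
  have h3 : AnalyticAt ℂ (fun z => fderiv ℂ f z 1) x :=
    ((ContinuousLinearMap.apply ℂ ℂ (1 : ℂ)).analyticAt _).comp h2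
  have : deriv f = fun z => fderiv ℂ f z 1 := by ext z; rfl
  rw [this]; exact h3

lemma deriv_comp' (g h : ℂ → ℂ) (x : ℂ) (hg : DifferentiableAt ℂ g (h x))
    (hh : DifferentiableAt ℂ h x) :
    deriv (fun z => g (h z)) x = deriv g (h x) * deriv h x :=
  deriv_comp x hg hh

lemma schwarzian_congr {g h : ℂ → ℂ} {z0 : ℂ} (hgh : g =ᶠ[nhds z0] h) :
    schwarzian g z0 = schwarzian h z0 := by
  have h1 : deriv g =ᶠ[nhds z0] deriv h := hgh.deriv
  have h2 : deriv (deriv g) =ᶠ[nhds z0] deriv (deriv h) := h1.deriv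
  have h3 : (fun w => deriv (deriv g) w / deriv g w) =ᶠ[nhds z0]
      (fun w => deriv (deriv h) w / deriv h w) := h2.div h1
  unfold schwarzian
  rw [h3.deriv_eq, h1.self_of_nhds, h2.self_of_nhds]

lemma schwarzian_comp (g h : ℂ → ℂ) (z0 : ℂ)
    (hg : AnalyticAt ℂ g (h z0)) (hg' : ∀ᶠ w in nhds (h z0), deriv g w ≠ 0)
    (hh : AnalyticAt ℂ h z0) (hh' : ∀ᶠ z in nhds z0, deriv h z ≠ 0) :
    schwarzian (fun z => g (h z)) z0
      = schwarzian g (h z0) * (deriv h z0) ^ 2 + schwarzian h z0 := by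
  have hhc : Filter.Tendsto h (nhds z0) (nhds (h z0)) := hh.continuousAt
  have evg : ∀ᶠ z in nhds z0, AnalyticAt ℂ g (h z) := hhc.eventually hg.eventually_analyticAt
  have evh : ∀ᶠ z in nhds z0, AnalyticAt ℂ h z := hh.eventually_analyticAt
  have evg' : ∀ᶠ z in nhds z0, deriv g (h z) ≠ 0 := hhc.eventually hg'
  -- first derivative
  have E1 : deriv (fun z => g (h z)) =ᶠ[nhds z0] fun z => deriv g (h z) * deriv h z := by
    filter_upwards [evg, evh] with z hgz hhz
    exact deriv_comp' g h z hgz.differentiableAt hhz.differentiableAt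
  -- second derivative
  have E2 : deriv (deriv (fun z => g (h z))) =ᶠ[nhds z0]
      fun z => deriv (deriv g) (h z) * deriv h z * deriv h z
        + deriv g (h z) * deriv (deriv h) z := by
    have := E1.deriv
    filter_upwards [this, evg, evh] with z hz hgz hhz
    rw [hz]
    have d1 : DifferentiableAt ℂ (fun z => deriv g (h z)) z :=
      ((analyticAt_deriv hgz).differentiableAt).comp z hhz.differentiableAt
    have d2 : DifferentiableAt ℂ (deriv h) z := (analyticAt_deriv hhz).differentiableAt
    rw [deriv_fun_mul d1 d2]
    rw [deriv_comp' (deriv g) h z (analyticAt_deriv hgz).differentiableAt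
      hhz.differentiableAt]
  -- pre-Schwarzian of composition
  have E3 : (fun z => deriv (deriv (fun z => g (h z))) z / deriv (fun z => g (h z)) z)
      =ᶠ[nhds z0] fun z =>
        (deriv (deriv g) (h z) / deriv g (h z)) * deriv h z
          + deriv (deriv h) z / deriv h z := by
    filter_upwards [E1, E2, evg', hh'] with z h1 h2 h3 h4
    rw [h1, h2]
    field_simp
  -- derivative of pre-Schwarzian at z0
  have hQg : AnalyticAt ℂ (fun w => deriv (deriv g) w / deriv g w) (h z0) :=
    (analyticAt_deriv (analyticAt_deriv hg)).div (analyticAt_deriv hg) hg'.self_of_nhds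
  have hQh : AnalyticAt ℂ (fun z => deriv (deriv h) z / deriv h z) z0 :=
    (analyticAt_deriv (analyticAt_deriv hh)).div (analyticAt_deriv hh) hh'.self_of_nhds
  have dcomp : DifferentiableAt ℂ (fun z => (deriv (deriv g) (h z) / deriv g (h z))) z0 :=
    hQg.differentiableAt.comp z0 hh.differentiableAt
  have dh' : DifferentiableAt ℂ (deriv h) z0 := (analyticAt_deriv hh).differentiableAt
  have E4 : deriv (fun z => deriv (deriv (fun z => g (h z))) z / deriv (fun z => g (h z)) z) z0
      = deriv (fun w => deriv (deriv g) w / deriv g w) (h z0) * deriv h z0 * deriv h z0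
        + (deriv (deriv g) (h z0) / deriv g (h z0)) * deriv (deriv h) z0
        + deriv (fun z => deriv (deriv h) z / deriv h z) z0 := by
    rw [E3.deriv_eq]
    rw [deriv_fun_add (dcomp.mul dh' : DifferentiableAt ℂ (fun z => _ * _) z0) hQh.differentiableAt]
    rw [deriv_fun_mul dcomp dh']
    rw [deriv_comp' (fun w => deriv (deriv g) w / deriv g w) h z0 hQg.differentiableAt
      hh.differentiableAt]
  -- assemble
  unfold schwarzian
  rw [E4, E2.self_of_nhds, E1.self_of_nhds]
  have hd : deriv h z0 ≠ 0 := hh'.self_of_nhds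
  have hb : deriv g (h z0) ≠ 0 := hg'.self_of_nhds
  set a := deriv (deriv g) (h z0) with ha
  set b := deriv g (h z0) with hbb
  set c := deriv (deriv h) z0 with hc
  set d := deriv h z0 with hdd
  set DA := deriv (fun w => deriv (deriv g) w / deriv g w) (h z0) with hDA
  set DB := deriv (fun z => deriv (deriv h) z / deriv h z) z0 with hDB
  simp only [← ha, ← hbb, ← hc, ← hdd]
  field_simp
  ring

lemma deriv_pow_fun (n : ℕ) : deriv (fun z : ℂ => z ^ n) = fun z => (n : ℂ) * z ^ (n - 1) := by
  ext z; simp [deriv_pow]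

lemma schwarzian_pow (n : ℕ) (hn : 2 ≤ n) (z0 : ℂ) (hz0 : z0 ≠ 0) :
    schwarzian (fun z => z ^ n) z0 = ((1 - (n : ℂ) ^ 2) / 2) / z0 ^ 2 := by
  have hev : ∀ᶠ z in nhds z0, z ≠ (0 : ℂ) := eventually_ne_nhds hz0
  have h1 : deriv (fun z : ℂ => z ^ n) = fun z => (n : ℂ) * z ^ (n - 1) := deriv_pow_fun n
  have h2 : deriv (deriv (fun z : ℂ => z ^ n))
      = fun z => (n : ℂ) * ((n - 1 : ℕ) * z ^ (n - 1 - 1)) := by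
    rw [h1]; ext z
    rw [deriv_const_mul _ (differentiableAt_pow _), deriv_pow_field]
  have hcast : ((n - 1 : ℕ) : ℂ) = (n : ℂ) - 1 := by
    push_cast [Nat.cast_sub (by omega : 1 ≤ n)]; ring
  have hn0 : (n : ℂ) ≠ 0 := Nat.cast_ne_zero.mpr (by omega)
  have hval : ∀ z : ℂ, z ≠ 0 →
      deriv (deriv (fun z : ℂ => z ^ n)) z / deriv (fun z : ℂ => z ^ n) z
        = ((n : ℂ) - 1) / z := by
    intro z hz
    simp only [h2]; simp only [h1]
    have hpow : z ^ (n - 1) = z ^ (n - 1 - 1) * z := by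
      rw [← pow_succ]; congr 1; omega
    have hz1 : z ^ (n - 1 - 1) ≠ 0 := pow_ne_zero _ hz
    rw [hcast, hpow]
    field_simp
  have hQ : (fun z => deriv (deriv (fun z : ℂ => z ^ n)) z / deriv (fun z : ℂ => z ^ n) z)
      =ᶠ[nhds z0] fun z => ((n : ℂ) - 1) / z := by
    filter_upwards [hev] with z hz using hval z hz
  unfold schwarzian
  rw [hQ.deriv_eq, hval z0 hz0]
  have hD : deriv (fun z : ℂ => ((n : ℂ) - 1) / z) z0 = -((n : ℂ) - 1) / z0 ^ 2 := by
    have he : (fun z : ℂ => ((n : ℂ) - 1) / z) = fun z : ℂ => ((n : ℂ) - 1) * z⁻¹ := by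
      ext z; ring
    rw [he, deriv_const_mul _ (differentiableAt_inv hz0), deriv_inv]
    field_simp
  rw [hD]
  field_simp
  ring

theorem stmt14 (n : ℕ) (hn : 2 ≤ n) (z0 : ℂ) (hz0 : z0 ≠ 0) (f fn : ℂ → ℂ)
    (hf : AnalyticAt ℂ f (z0 ^ n))
    (hf' : ∀ᶠ w in nhds (z0 ^ n), deriv f w ≠ 0)
    (hfn : AnalyticAt ℂ fn z0)
    (hfn' : ∀ᶠ z in nhds z0, deriv fn z ≠ 0)
    (hfnz : ∀ᶠ z in nhds z0, fn z ≠ 0)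
    (hcomp : ∀ᶠ z in nhds z0, fn z ^ n = f (z ^ n)) :
    ((1 - (n : ℂ) ^ 2) / 2) * (deriv fn z0 / fn z0) ^ 2 + schwarzian fn z0
      = schwarzian f (z0 ^ n) * (n : ℂ) ^ 2 * z0 ^ (2 * (n - 1))
        + ((1 - (n : ℂ) ^ 2) / 2) / z0 ^ 2 := by
  have hfnz0 : fn z0 ≠ 0 := hfnz.self_of_nhds
  have hP' : ∀ (w : ℂ), w ≠ 0 → deriv (fun z : ℂ => z ^ n) w ≠ 0 := by
    intro w hw
    rw [deriv_pow_fun]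
    exact mul_ne_zero (Nat.cast_ne_zero.mpr (by omega)) (pow_ne_zero _ hw)
  have hPan : ∀ w : ℂ, AnalyticAt ℂ (fun z : ℂ => z ^ n) w := fun w =>
    ((analyticAt_id (𝕜 := ℂ) (z := w)).pow n : )
  -- left side via composition P ∘ fn
  have L : schwarzian (fun z => fn z ^ n) z0
      = schwarzian (fun w : ℂ => w ^ n) (fn z0) * (deriv fn z0) ^ 2 + schwarzian fn z0 := by
    apply schwarzian_comp
    · exact hPan _
    · filter_upwards [eventually_ne_nhds hfnz0] with w hw using hP' w hw
    · exact hfn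
    · exact hfn'
  -- right side via composition f ∘ P
  have hz0n : z0 ^ n ≠ 0 := pow_ne_zero _ hz0
  have R : schwarzian (fun z => f (z ^ n)) z0
      = schwarzian f (z0 ^ n) * (deriv (fun z : ℂ => z ^ n) z0) ^ 2
        + schwarzian (fun z : ℂ => z ^ n) z0 := by
    apply schwarzian_comp
    · exact hf
    · exact hf'
    · exact hPan _
    · filter_upwards [eventually_ne_nhds hz0] with w hw using hP' w hw
  have key : schwarzian (fun z => fn z ^ n) z0 = schwarzian (fun z => f (z ^ n)) z0 :=
    schwarzian_congr hcomp
  rw [L, R, schwarzian_pow n hn (fn z0) hfnz0, schwarzian_pow n hn z0 hz0] at key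
  have hdP : (deriv (fun z : ℂ => z ^ n) z0) ^ 2 = (n : ℂ) ^ 2 * z0 ^ (2 * (n - 1)) := by
    rw [deriv_pow_fun]
    rw [mul_pow, ← pow_mul, Nat.mul_comm]
  rw [hdP] at key
  have expand : ((1 - (n : ℂ) ^ 2) / 2) / (fn z0) ^ 2 * (deriv fn z0) ^ 2
      = ((1 - (n : ℂ) ^ 2) / 2) * (deriv fn z0 / fn z0) ^ 2 := by
    field_simp
  rw [← expand]
  rw [key]
  ring
end
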